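/- arXiv:0803.1088 — 2 statements merged into one kernel-verified Lean document; each statement's English description precedes it below -/
import Mathlib

section
/- Let P ⊂ ℝ³ be a finite set of n points in general position (no four coplanar) with n ≥ 4, and let p, q ∈ P with the depth of segment pq at most j, where 0 ≤ 2j ≤ n − 4. Then there exist at least two distinct points r ∈ P \ {p,q} such that the triangle pqr, suitably oriented, is a j-facet of P (i.e., the plane through p, q, r has exactly j points of P strictly on its positive side). -/
/-- Points of `ℝ³` as triples. -/
abbrev V3 : Type := ℝ × ℝ × ℝ

/-- The standard dot product on `ℝ³`. -/
def dot3 (a x : V3) : ℝ := a.1 * x.1 + a.2.1 * x.2.1 + a.2.2 * x.2.2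

/-- Number of points of `P` strictly on the positive side of the plane `dot3 a • = c`. -/
noncomputable def sideGT (P : Finset V3) (a : V3) (c : ℝ) : ℕ :=
  {x ∈ (P : Set V3) | c < dot3 a x}.ncard

/-- Number of points of `P` strictly on the negative side of the plane `dot3 a • = c`. -/
noncomputable def sideLT (P : Finset V3) (a : V3) (c : ℝ) : ℕ :=
  {x ∈ (P : Set V3) | dot3 a x < c}.ncard

/-- The segment `pq` has depth at least `k` with respect to `P`: every plane through
`p` and `q` has at least `k` points of `P` strictly on each of its two open sides. -/
def DepthAtLeast (P : Finset V3) (p q : V3) (k : ℕ) : Prop :=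
  ∀ a : V3, a ≠ 0 → dot3 a p = dot3 a q →
    k ≤ sideGT P a (dot3 a p) ∧ k ≤ sideLT P a (dot3 a p)

/-- The segment `pq` has depth exactly `k`: `k` is the smallest integer such that every
plane through `p` and `q` has at least `k` points of `P` strictly on each side. -/
def DepthEq (P : Finset V3) (p q : V3) (k : ℕ) : Prop :=
  DepthAtLeast P p q k ∧ ¬ DepthAtLeast P p q (k + 1)

/-- General position in `ℝ³`: no four points of `P` are coplanar. -/
def GenPos3 (P : Finset V3) : Prop :=
  ∀ s : Finset V3, s ⊆ P → s.card = 4 → ¬ Coplanar ℝ (s : Set V3)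

/-- Convex position: every point of `P` is a vertex of the convex hull of `P`. -/
def ConvexPos3 (P : Finset V3) : Prop :=
  ∀ p ∈ P, p ∉ convexHull ℝ ((P.erase p : Finset V3) : Set V3)

/-- The (suitably oriented) plane through `p`, `q`, `r` has exactly `j` points of `P`
strictly on its positive side, i.e. `pqr` is a `j`-facet of `P`. -/
def IsJFacetThrough (P : Finset V3) (j : ℕ) (p q r : V3) : Prop :=
  ∃ a : V3, a ≠ 0 ∧ dot3 a p = dot3 a q ∧ dot3 a q = dot3 a r ∧
    sideGT P a (dot3 a p) = j

namespace Aux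

lemma dot3_comm (a b : V3) : dot3 a b = dot3 b a := by simp [dot3]; ring

lemma dot3_add_right (a x y : V3) : dot3 a (x + y) = dot3 a x + dot3 a y := by
  simp [dot3, Prod.fst_add, Prod.snd_add]; ring

lemma dot3_sub_right (a x y : V3) : dot3 a (x - y) = dot3 a x - dot3 a y := by
  simp [dot3, Prod.fst_sub, Prod.snd_sub]; ring

lemma dot3_smul_right (a : V3) (t : ℝ) (x : V3) : dot3 a (t • x) = t * dot3 a x := by
  simp [dot3, Prod.smul_fst, Prod.smul_snd, smul_eq_mul]; ring

lemma dot3_add_left (a b x : V3) : dot3 (a + b) x = dot3 a x + dot3 b x := by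
  rw [dot3_comm, dot3_add_right, dot3_comm x a, dot3_comm x b]

lemma dot3_smul_left (t : ℝ) (a x : V3) : dot3 (t • a) x = t * dot3 a x := by
  rw [dot3_comm, dot3_smul_right, dot3_comm]

lemma dot3_neg_left (a x : V3) : dot3 (-a) x = - dot3 a x := by
  simp [dot3]; ring

lemma dot3_self_nonneg (a : V3) : 0 ≤ dot3 a a := by
  simp only [dot3]; nlinarith [sq_nonneg a.1, sq_nonneg a.2.1, sq_nonneg a.2.2]

lemma dot3_self_eq_zero {a : V3} (h : dot3 a a = 0) : a = 0 := by
  obtain ⟨x, y, z⟩ := a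
  simp only [dot3] at h
  have hx : x = 0 := by nlinarith [sq_nonneg x, sq_nonneg y, sq_nonneg z]
  have hy : y = 0 := by nlinarith [sq_nonneg x, sq_nonneg y, sq_nonneg z]
  have hz : z = 0 := by nlinarith [sq_nonneg x, sq_nonneg y, sq_nonneg z]
  simp [hx, hy, hz, Prod.ext_iff]

lemma dot3_self_ne_zero {a : V3} (h : a ≠ 0) : dot3 a a ≠ 0 :=
  fun hz => h (dot3_self_eq_zero hz)

def cross3 (a b : V3) : V3 :=
  (a.2.1 * b.2.2 - a.2.2 * b.2.1, a.2.2 * b.1 - a.1 * b.2.2, a.1 * b.2.1 - a.2.1 * b.1)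

lemma cross3_dot_left (a b : V3) : dot3 (cross3 a b) a = 0 := by
  simp [dot3, cross3]; ring

lemma cross3_dot_right (a b : V3) : dot3 (cross3 a b) b = 0 := by
  simp [dot3, cross3]; ring

lemma cross3_smul_self (a : V3) (t : ℝ) : cross3 a (t • a) = 0 := by
  simp [cross3, Prod.smul_fst, Prod.smul_snd, smul_eq_mul, Prod.ext_iff]; constructor <;> [ring; constructor <;> ring]

/-- If `a ≠ 0` and `cross3 a b = 0` then `b` is a multiple of `a`. -/
lemma eq_smul_of_cross3_eq_zero {a b : V3} (ha : a ≠ 0) (h : cross3 a b = 0) :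
    ∃ μ : ℝ, b = μ • a := by
  have haa : dot3 a a ≠ 0 := dot3_self_ne_zero ha
  refine ⟨dot3 a b / dot3 a a, ?_⟩
  obtain ⟨a1, a2, a3⟩ := a
  obtain ⟨b1, b2, b3⟩ := b
  simp only [cross3, Prod.ext_iff, Prod.mk.injEq, Prod.fst_zero, Prod.snd_zero] at h
  obtain ⟨h1, h2, h3⟩ := h
  simp only [dot3] at haa ⊢
  have key1 : (a1*a1 + a2*a2 + a3*a3) * b1 = (a1*b1 + a2*b2 + a3*b3) * a1 := by
    linear_combination a3 * h2 - a2 * h3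
  have key2 : (a1*a1 + a2*a2 + a3*a3) * b2 = (a1*b1 + a2*b2 + a3*b3) * a2 := by
    linear_combination a1 * h3 - a3 * h1
  have key3 : (a1*a1 + a2*a2 + a3*a3) * b3 = (a1*b1 + a2*b2 + a3*b3) * a3 := by
    linear_combination a2 * h1 - a1 * h2
  simp only [Prod.ext_iff, Prod.smul_fst, Prod.smul_snd, smul_eq_mul, Prod.mk.injEq]
  refine ⟨?_, ?_, ?_⟩ <;> rw [div_mul_eq_mul_div, eq_div_iff haa] <;> linarith [key1, key2, key3]

end Aux
open Aux in
lemma sideGT_eq_card (P : Finset V3) (a : V3) (c : ℝ) :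
    sideGT P a c = (P.filter (fun x => c < dot3 a x)).card := by
  rw [sideGT]
  rw [show {x ∈ (P : Set V3) | c < dot3 a x} = ↑(P.filter (fun x => c < dot3 a x)) by
    simp [Finset.coe_filter]]
  exact Set.ncard_coe_finset _

open Aux in
lemma sideLT_eq_card (P : Finset V3) (a : V3) (c : ℝ) :
    sideLT P a c = (P.filter (fun x => dot3 a x < c)).card := by
  rw [sideLT]
  rw [show {x ∈ (P : Set V3) | dot3 a x < c} = ↑(P.filter (fun x => dot3 a x < c)) by
    simp [Finset.coe_filter]]
  exact Set.ncard_coe_finset _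

open Aux in
lemma sideLT_eq_sideGT_neg (P : Finset V3) (a : V3) (c : ℝ) :
    sideLT P a c = sideGT P (-a) (-c) := by
  rw [sideLT_eq_card, sideGT_eq_card]
  congr 1
  apply Finset.filter_congr
  intro x _
  rw [dot3_neg_left]
  constructor <;> intro h <;> linarith

namespace Aux

/-- Any set contained in an affine plane is coplanar. -/
lemma coplanar_of_plane {a : V3} (ha : a ≠ 0) (c : ℝ) {S : Set V3}
    (hS : ∀ z ∈ S, dot3 a z = c) : Coplanar ℝ S := by
  classical
  set φ : V3 →ₗ[ℝ] ℝ :=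
    { toFun := fun x => dot3 a x
      map_add' := fun x y => dot3_add_right a x y
      map_smul' := fun t x => dot3_smul_right a t x } with hφ
  have hker : vectorSpan ℝ S ≤ LinearMap.ker φ := by
    rw [vectorSpan_def, Submodule.span_le]
    rintro v ⟨x, hx, y, hy, rfl⟩
    simp only [SetLike.mem_coe, LinearMap.mem_ker, hφ, LinearMap.coe_mk, AddHom.coe_mk]
    rw [vsub_eq_sub, dot3_sub_right, hS x hx, hS y hy, sub_self]
  have hφne : φ ≠ 0 := by
    intro h0
    apply dot3_self_ne_zero ha
    have := congrArg (fun f => f a) (h0 : φ = 0)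
    simpa [hφ] using this
  have hrange : 1 ≤ Module.finrank ℝ (LinearMap.range φ) := by
    rw [Nat.one_le_iff_ne_zero]
    intro h0
    apply hφne
    exact LinearMap.range_eq_bot.mp (Submodule.finrank_eq_zero.mp h0)
  have hdim : Module.finrank ℝ V3 = 3 := by
    simp [Module.finrank_prod, Module.finrank_self]
  have hkerdim : Module.finrank ℝ (LinearMap.ker φ) ≤ 2 := by
    have := LinearMap.finrank_range_add_finrank_ker φ
    omega
  rw [Coplanar]
  calc Module.rank ℝ (vectorSpan ℝ S) ≤ Module.rank ℝ (LinearMap.ker φ) :=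
        Submodule.rank_mono hker
    _ = (Module.finrank ℝ (LinearMap.ker φ) : Cardinal) := (Module.finrank_eq_rank ℝ _).symm
    _ ≤ 2 := by
        refine le_trans (Nat.cast_le.mpr hkerdim) ?_
        norm_num

end Aux
namespace Aux

/-- From general position (plus `|P| ≥ 4`), no three distinct points of `P` are collinear. -/
lemma not_collinear_pt (P : Finset V3) (hgen : GenPos3 P) (hcard : 4 ≤ P.card)
    (p q x : V3) (hp : p ∈ P) (hq : q ∈ P) (hx : x ∈ P)
    (hpq : p ≠ q) (hxp : x ≠ p) (hxq : x ≠ q)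
    (μ : ℝ) (hμ : x - p = μ • (q - p)) : False := by
  classical
  have hcol : Collinear ℝ ({p, q, x} : Set V3) := by
    rw [collinear_iff_of_mem (Set.mem_insert p {q, x})]
    refine ⟨q - p, ?_⟩
    rintro z (rfl | rfl | rfl)
    · exact ⟨0, by simp⟩
    · refine ⟨1, by simp [vadd_eq_add]⟩
    · refine ⟨μ, ?_⟩
      have : z = μ • (q - p) + p := by rw [← hμ]; abel
      simpa [vadd_eq_add] using this
  have hy : ∃ y ∈ P, y ∉ ({p, q, x} : Finset V3) := by
    by_contra hcon
    push_neg at hcon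
    have hsub : P ⊆ ({p, q, x} : Finset V3) := hcon
    have hle := Finset.card_le_card hsub
    have h2 : ({q, x} : Finset V3).card ≤ 2 :=
      le_trans (Finset.card_insert_le _ _) (by simp)
    have h3 : ({p, q, x} : Finset V3).card ≤ 3 := by
      refine le_trans (Finset.card_insert_le _ _) ?_
      omega
    omega
  obtain ⟨y, hyP, hynot⟩ := hy
  simp only [Finset.mem_insert, Finset.mem_singleton] at hynot
  push_neg at hynot
  obtain ⟨hyp, hyq, hyx⟩ := hynot
  have hcop : Coplanar ℝ (insert y ({p, q, x} : Set V3)) := hcol.coplanar_insert y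
  apply hgen ({y, p, q, x} : Finset V3)
  · intro z hz
    simp only [Finset.mem_insert, Finset.mem_singleton] at hz
    rcases hz with rfl | rfl | rfl | rfl <;> assumption
  · rw [Finset.card_insert_of_notMem (by simp [hyp, hyq, hyx]),
      Finset.card_insert_of_notMem (by simp [hpq, Ne.symm hxp]),
      Finset.card_insert_of_notMem (by simp [Ne.symm hxq]), Finset.card_singleton]
  · convert hcop using 1
    simp [Finset.coe_insert, Finset.coe_singleton]

/-- A nonzero real quadratic has finitely many roots. -/
lemma quad_finite {A B C : ℝ} (h : ¬(A = 0 ∧ B = 0 ∧ C = 0)) :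
    {s : ℝ | A + B * s + C * s ^ 2 = 0}.Finite := by
  classical
  set p : Polynomial ℝ :=
    Polynomial.C A + Polynomial.C B * Polynomial.X + Polynomial.C C * Polynomial.X ^ 2 with hpdef
  have hc0 : p.coeff 0 = A := by simp [hpdef, Polynomial.coeff_add]
  have hc1 : p.coeff 1 = B := by simp [hpdef, Polynomial.coeff_add]
  have hc2 : p.coeff 2 = C := by simp [hpdef, Polynomial.coeff_add]
  have hp : p ≠ 0 := by
    intro h0
    exact h ⟨by rw [← hc0, h0]; simp, by rw [← hc1, h0]; simp, by rw [← hc2, h0]; simp⟩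
  refine Set.Finite.subset (Polynomial.finite_setOf_isRoot hp) ?_
  intro s hs
  simp only [Set.mem_setOf_eq] at hs
  show Polynomial.eval s p = 0
  rw [hpdef]
  simp only [Polynomial.eval_add, Polynomial.eval_mul,
    Polynomial.eval_C, Polynomial.eval_X, Polynomial.eval_pow]
  linarith [hs]

end Aux
namespace Aux

lemma cross3_add_right (a x y : V3) : cross3 a (x + y) = cross3 a x + cross3 a y := by
  simp only [cross3, Prod.ext_iff, Prod.fst_add, Prod.snd_add, Prod.mk.injEq]
  refine ⟨by ring, by ring, by ring⟩

lemma cross3_smul_right (a : V3) (t : ℝ) (x : V3) : cross3 a (t • x) = t • cross3 a x := by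
  simp only [cross3, Prod.ext_iff, Prod.smul_fst, Prod.smul_snd, smul_eq_mul, Prod.mk.injEq]
  refine ⟨by ring, by ring, by ring⟩

lemma cross3_smul_self' (a : V3) (t : ℝ) : cross3 (t • a) a = 0 := by
  simp only [cross3, Prod.smul_fst, Prod.smul_snd, smul_eq_mul, Prod.ext_iff, Prod.mk.injEq,
    Prod.fst_zero, Prod.snd_zero]
  refine ⟨by ring, by ring, by ring⟩

/-- Coordinate projection picking lemma. -/
lemma coord_ne {x : V3} (h : x ≠ 0) :
    ∃ π : V3 → ℝ, (∀ a b : V3, π (a + b) = π a + π b) ∧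
      (∀ (t : ℝ) (a : V3), π (t • a) = t * π a) ∧ π 0 = 0 ∧ π x ≠ 0 := by
  have hco : x.1 ≠ 0 ∨ x.2.1 ≠ 0 ∨ x.2.2 ≠ 0 := by
    by_contra hc
    push_neg at hc
    exact h (by obtain ⟨x1, x2, x3⟩ := x; simp_all [Prod.ext_iff])
  rcases hco with h1 | h2 | h3
  · exact ⟨fun v => v.1, fun a b => rfl, fun t a => rfl, rfl, h1⟩
  · exact ⟨fun v => v.2.1, fun a b => rfl, fun t a => rfl, rfl, h2⟩
  · exact ⟨fun v => v.2.2, fun a b => rfl, fun t a => rfl, rfl, h3⟩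

noncomputable def projd (d y : V3) : V3 := y - (dot3 y d / dot3 d d) • d

lemma projd_dot_right (d x y : V3) :
    dot3 x (projd d y) = dot3 x y - (dot3 y d / dot3 d d) * dot3 x d := by
  rw [projd, dot3_sub_right, dot3_smul_right]

lemma projd_dot {d : V3} (hd : d ≠ 0) (y : V3) : dot3 (projd d y) d = 0 := by
  have hdd := dot3_self_ne_zero hd
  rw [projd, dot3_comm, dot3_sub_right, dot3_smul_right, dot3_comm d y]
  field_simp
  ring

lemma projd_expand (d y : V3) :
    projd d y = y.1 • projd d (1,0,0) + y.2.1 • projd d (0,1,0) + y.2.2 • projd d (0,0,1) := by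
  obtain ⟨d1, d2, d3⟩ := d
  obtain ⟨y1, y2, y3⟩ := y
  simp only [projd, dot3, Prod.ext_iff, Prod.fst_sub, Prod.snd_sub, Prod.fst_add, Prod.snd_add,
    Prod.smul_fst, Prod.smul_snd, smul_eq_mul, Prod.mk.injEq]
  norm_num
  refine ⟨by ring, by ring, by ring⟩

/-- Existence of a suitable second plane direction. -/
lemma exists_a1 (d : V3) (hd : d ≠ 0) (a0 : V3) (ha0 : a0 ≠ 0) (hda0 : dot3 a0 d = 0)
    (F : Finset V3) (hF : ∀ y ∈ F, ∀ μ : ℝ, y ≠ μ • d) :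
    ∃ a1 : V3, dot3 a1 d = 0 ∧ (∀ y ∈ F, dot3 a1 y ≠ 0) ∧ (∀ t : ℝ, a0 + t • a1 ≠ 0) := by
  classical
  set u := projd d (1,0,0) with hu
  set v := projd d (0,1,0) with hv
  set w := projd d (0,0,1) with hw
  have hud : dot3 u d = 0 := projd_dot hd _
  have hvd : dot3 v d = 0 := projd_dot hd _
  have hwd : dot3 w d = 0 := projd_dot hd _
  -- for y in F the coefficient triple does not vanish
  have hkey : ∀ y ∈ F, ¬(dot3 u y = 0 ∧ dot3 v y = 0 ∧ dot3 w y = 0) := by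
    intro y hy hall
    obtain ⟨h1, h2, h3⟩ := hall
    have hPy : dot3 (projd d y) y = 0 := by
      rw [projd_expand d y, dot3_add_left, dot3_add_left, dot3_smul_left, dot3_smul_left,
        dot3_smul_left, ← hu, ← hv, ← hw, h1, h2, h3]
      ring
    have hPP : dot3 (projd d y) (projd d y) = 0 := by
      rw [projd_dot_right, hPy, projd_dot hd y]
      ring
    have hP0 : projd d y = 0 := dot3_self_eq_zero hPP
    have : y = (dot3 y d / dot3 d d) • d := by
      have := hP0
      rw [projd, sub_eq_zero] at this
      exact this
    exact hF y hy _ this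
  -- the cross-product coefficient triple does not vanish
  have hcross : ¬(cross3 a0 u = 0 ∧ cross3 a0 v = 0 ∧ cross3 a0 w = 0) := by
    rintro ⟨h1, h2, h3⟩
    obtain ⟨μ1, hu1⟩ := eq_smul_of_cross3_eq_zero ha0 h1
    obtain ⟨μ2, hv1⟩ := eq_smul_of_cross3_eq_zero ha0 h2
    obtain ⟨μ3, hw1⟩ := eq_smul_of_cross3_eq_zero ha0 h3
    set cda := cross3 d a0 with hcda
    have hcd : dot3 cda d = 0 := cross3_dot_left d a0
    have hca : dot3 cda a0 = 0 := cross3_dot_right d a0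
    have hproj : projd d cda = cda := by
      show cda - (dot3 cda d / dot3 d d) • d = cda
      rw [hcd]
      simp
    have hPP : dot3 cda cda = 0 := by
      have hexp := projd_expand d cda
      rw [hproj, ← hu, ← hv, ← hw, hu1, hv1, hw1] at hexp
      nth_rewrite 2 [hexp]
      rw [dot3_add_right, dot3_add_right, dot3_smul_right, dot3_smul_right, dot3_smul_right,
        dot3_smul_right, dot3_smul_right, dot3_smul_right, hca]
      ring
    have hc0 : cda = 0 := dot3_self_eq_zero hPP
    obtain ⟨μ, hμ⟩ := eq_smul_of_cross3_eq_zero hd (hcda ▸ hc0)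
    have : dot3 a0 d = μ * dot3 d d := by rw [hμ, dot3_smul_left, dot3_comm]
    have hμ0 : μ = 0 := by
      have hdd := dot3_self_ne_zero hd
      rw [hda0] at this
      field_simp at this
      exact (mul_eq_zero.mp this.symm).resolve_right hdd
    exact ha0 (by rw [hμ, hμ0, zero_smul])
  -- pick a coordinate projection witnessing nonvanishing of the cross triple
  have hXYZ : ¬(cross3 a0 u = 0 ∧ cross3 a0 v = 0 ∧ cross3 a0 w = 0) := hcross
  have hπ : ∃ π : V3 → ℝ, (∀ a b : V3, π (a + b) = π a + π b) ∧
      (∀ (t : ℝ) (a : V3), π (t • a) = t * π a) ∧ π 0 = 0 ∧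
      ¬(π (cross3 a0 u) = 0 ∧ π (cross3 a0 v) = 0 ∧ π (cross3 a0 w) = 0) := by
    by_cases h1 : cross3 a0 u = 0
    · by_cases h2 : cross3 a0 v = 0
      · have h3 : cross3 a0 w ≠ 0 := fun h3 => hXYZ ⟨h1, h2, h3⟩
        obtain ⟨π, ha, hs, h0, hn⟩ := coord_ne h3
        exact ⟨π, ha, hs, h0, fun hc => hn hc.2.2⟩
      · obtain ⟨π, ha, hs, h0, hn⟩ := coord_ne h2
        exact ⟨π, ha, hs, h0, fun hc => hn hc.2.1⟩
    · obtain ⟨π, ha, hs, h0, hn⟩ := coord_ne h1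
      exact ⟨π, ha, hs, h0, fun hc => hn hc.1⟩
  obtain ⟨π, hπadd, hπsmul, hπ0, hπne⟩ := hπ
  -- bad parameter sets
  have hbadF : ∀ y ∈ F, {s : ℝ | dot3 u y + dot3 v y * s + dot3 w y * s ^ 2 = 0}.Finite :=
    fun y hy => quad_finite (hkey y hy)
  have hbadC : {s : ℝ | π (cross3 a0 u) + π (cross3 a0 v) * s + π (cross3 a0 w) * s ^ 2 = 0}.Finite :=
    quad_finite hπne
  have hfin : (((⋃ y ∈ F, {s : ℝ | dot3 u y + dot3 v y * s + dot3 w y * s ^ 2 = 0}) ∪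
      {s : ℝ | π (cross3 a0 u) + π (cross3 a0 v) * s + π (cross3 a0 w) * s ^ 2 = 0})).Finite := by
    refine Set.Finite.union ?_ hbadC
    exact Set.Finite.biUnion F.finite_toSet hbadF
  obtain ⟨s, hs⟩ := hfin.infinite_compl.nonempty
  simp only [Set.mem_compl_iff, Set.mem_union, Set.mem_iUnion, not_or, not_exists] at hs
  obtain ⟨hsF, hsC⟩ := hs
  refine ⟨u + s • v + s ^ 2 • w, ?_, ?_, ?_⟩
  · rw [dot3_add_left, dot3_add_left, dot3_smul_left, dot3_smul_left, hud, hvd, hwd]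
    ring
  · intro y hy hzero
    apply hsF y hy
    rw [dot3_add_left, dot3_add_left, dot3_smul_left, dot3_smul_left] at hzero
    show dot3 u y + dot3 v y * s + dot3 w y * s ^ 2 = 0
    linarith [hzero]
  · intro t ht
    apply hsC
    have ha0eq : a0 = (-t) • (u + s • v + s ^ 2 • w) := by
      have : a0 = -(t • (u + s • v + s ^ 2 • w)) := by
        rw [← sub_eq_zero]
        rw [sub_neg_eq_add]
        exact ht
      rw [this, ← neg_smul]
    have hcr : cross3 a0 (u + s • v + s ^ 2 • w) = 0 := by
      rw [ha0eq]
      exact cross3_smul_self' _ _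
    have hexp : cross3 a0 (u + s • v + s ^ 2 • w)
        = cross3 a0 u + s • cross3 a0 v + s ^ 2 • cross3 a0 w := by
      rw [cross3_add_right, cross3_add_right, cross3_smul_right, cross3_smul_right]
    rw [hexp] at hcr
    have := congrArg π hcr
    rw [hπadd, hπadd, hπsmul, hπsmul, hπ0] at this
    show π (cross3 a0 u) + π (cross3 a0 v) * s + π (cross3 a0 w) * s ^ 2 = 0
    linarith [this]

end Aux
namespace Aux

lemma crossing (d : ℕ → ℕ) (N j : ℕ) (h0 : d 0 ≤ j) (hN : j < d N)
    (hstep : ∀ i < N, d (i + 1) ≤ d i + 1) :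
    ∃ i < N, d i ≤ j ∧ d (i + 1) = j + 1 := by
  induction N with
  | zero => omega
  | succ N ih =>
    by_cases hdN : d N ≤ j
    · exact ⟨N, Nat.lt_succ_self N, hdN, by have := hstep N (Nat.lt_succ_self N); omega⟩
    · obtain ⟨i, hi, h1, h2⟩ := ih (by omega) (fun i hi => hstep i (by omega))
      exact ⟨i, by omega, h1, h2⟩

lemma core {ι : Type*} [DecidableEq ι] (Q : Finset ι) (α β : ι → ℝ) (j : ℕ)
    (hm : 2 * j + 2 ≤ Q.card)
    (hβ : ∀ x ∈ Q, β x ≠ 0)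
    (hind : ∀ x ∈ Q, ∀ y ∈ Q, x ≠ y → α x * β y ≠ α y * β x)
    (hstart : (Q.filter fun x => 0 < α x).card ≤ j) :
    ∃ r ∈ Q, ∃ s ∈ Q, r ≠ s ∧
      (∃ t : ℝ, α r + t * β r = 0 ∧
        ((Q.filter fun x => 0 < α x + t * β x).card = j ∨
         (Q.filter fun x => α x + t * β x < 0).card = j)) ∧
      (∃ t : ℝ, α s + t * β s = 0 ∧
        ((Q.filter fun x => 0 < α x + t * β x).card = j ∨
         (Q.filter fun x => α x + t * β x < 0).card = j)) := by
  classical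
  set m := Q.card with hmdef
  set t : ι → ℝ := fun x => -(α x) / β x with htdef
  have hval : ∀ y ∈ Q, ∀ s : ℝ, α y + s * β y = β y * (s - t y) := by
    intro y hy s
    have hβy := hβ y hy
    have hdiv : β y * (-α y / β y) = -α y := by field_simp
    simp only [htdef, mul_sub, hdiv]
    ring
  have hroot : ∀ x ∈ Q, α x + t x * β x = 0 := by
    intro x hx
    rw [hval x hx]
    ring
  have htne : ∀ x ∈ Q, ∀ y ∈ Q, x ≠ y → t x ≠ t y := by
    intro x hx y hy hxy hts
    apply hind x hx y hy hxy
    have hbx := hβ x hx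
    have hby := hβ y hy
    rw [htdef] at hts
    field_simp at hts
    linarith
  set ρ : ι → ℕ := fun x => (Q.filter fun z => t z < t x).card with hρdef
  -- basic rank lemmas
  have L1 : ∀ y ∈ Q, ∀ s : ℝ, t y < s → ρ y < (Q.filter fun z => t z < s).card := by
    intro y hy s hs
    apply Finset.card_lt_card
    constructor
    · intro z hz
      simp only [Finset.mem_filter] at hz ⊢
      exact ⟨hz.1, lt_trans hz.2 hs⟩
    · intro hsub
      have := hsub (Finset.mem_filter.mpr ⟨hy, hs⟩)
      simp only [Finset.mem_filter] at this
      exact lt_irrefl _ this.2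
  have L2 : ∀ y : ι, ∀ s : ℝ, s ≤ t y → (Q.filter fun z => t z < s).card ≤ ρ y := by
    intro y s hs
    apply Finset.card_le_card
    intro z hz
    simp only [Finset.mem_filter] at hz ⊢
    exact ⟨hz.1, lt_of_lt_of_le hz.2 hs⟩
  have L3 : ∀ y ∈ Q, ∀ s : ℝ, t y ≤ s → ρ y < (Q.filter fun z => t z ≤ s).card := by
    intro y hy s hs
    apply Finset.card_lt_card
    constructor
    · intro z hz
      simp only [Finset.mem_filter] at hz ⊢
      exact ⟨hz.1, le_trans (le_of_lt hz.2) hs⟩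
    · intro hsub
      have := hsub (Finset.mem_filter.mpr ⟨hy, hs⟩)
      simp only [Finset.mem_filter] at this
      exact lt_irrefl _ this.2
  have L4 : ∀ y : ι, ∀ s : ℝ, s < t y → (Q.filter fun z => t z ≤ s).card ≤ ρ y := by
    intro y s hs
    apply Finset.card_le_card
    intro z hz
    simp only [Finset.mem_filter] at hz ⊢
    exact ⟨hz.1, lt_of_le_of_lt hz.2 hs⟩
  have hρmono : ∀ x ∈ Q, ∀ y ∈ Q, (ρ x < ρ y ↔ t x < t y) := by
    intro x hx y hy
    constructor
    · intro h
      by_contra hc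
      push_neg at hc
      have h2 := L2 x (t y) hc
      have h3 : ρ y = (Q.filter fun z => t z < t y).card := rfl
      omega
    · intro h
      exact L1 x hx (t y) h
  have hρinj : ∀ x ∈ Q, ∀ y ∈ Q, ρ x = ρ y → x = y := by
    intro x hx y hy h
    by_contra hxy
    rcases lt_trichotomy (t x) (t y) with hlt | heq | hgt
    · have := (hρmono x hx y hy).mpr hlt; omega
    · exact htne x hx y hy hxy heq
    · have := (hρmono y hy x hx).mpr hgt; omega
  have hρlt : ∀ x ∈ Q, ρ x < m := by
    intro x hx
    apply Finset.card_lt_card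
    constructor
    · exact Finset.filter_subset _ _
    · intro hsub
      have := hsub hx
      simp only [Finset.mem_filter] at this
      exact lt_irrefl _ this.2
  have hsurj : ∀ i < m, ∃ x ∈ Q, ρ x = i := by
    intro i hi
    have himg : Q.image ρ = Finset.range m := by
      apply Finset.eq_of_subset_of_card_le
      · intro k hk
        simp only [Finset.mem_image] at hk
        obtain ⟨x, hx, rfl⟩ := hk
        exact Finset.mem_range.mpr (hρlt x hx)
      · rw [Finset.card_range, Finset.card_image_of_injOn]
        intro x hx y hy h
        exact hρinj x hx y hy h
    have : i ∈ Q.image ρ := by rw [himg]; exact Finset.mem_range.mpr hi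
    simp only [Finset.mem_image] at this
    obtain ⟨x, hx, hxi⟩ := this
    exact ⟨x, hx, hxi⟩
  set c : ℕ → ℕ := fun i => (Q.filter fun y => if 0 < β y then ρ y < i else i ≤ ρ y).card
    with hcdef
  set v : ι → ℕ := fun x => (Q.filter fun y => 0 < α y + t x * β y).card with hvdef
  set w : ι → ℕ := fun x => (Q.filter fun y => α y + t x * β y < 0).card with hwdef
  have hcle : ∀ i, c i ≤ m := fun i => Finset.card_filter_le _ _
  -- the value at an event
  have hvx : ∀ x ∈ Q, (Q.filter fun y => 0 < α y + t x * β y)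
      = (Q.filter fun y => if 0 < β y then ρ y < ρ x else ρ x < ρ y) := by
    intro x hx
    apply Finset.filter_congr
    intro y hy
    rw [hval y hy]
    have hby := hβ y hy
    rcases lt_or_gt_of_ne hby with hneg | hpos
    · simp only [if_neg (not_lt.mpr (le_of_lt hneg))]
      constructor
      · intro h
        have hlt : t x < t y := by nlinarith
        exact (hρmono x hx y hy).mpr hlt
      · intro h
        have hlt : t x < t y := (hρmono x hx y hy).mp h
        nlinarith
    · simp only [if_pos hpos]
      constructor
      · intro h
        have hlt : t y < t x := by nlinarith
        exact (hρmono y hy x hx).mpr hlt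
      · intro h
        have hlt : t y < t x := (hρmono y hy x hx).mp h
        nlinarith
  -- v x + w x + 1 = m
  have hzero_filter : ∀ x ∈ Q, (Q.filter fun y => α y + t x * β y = 0) = {x} := by
    intro x hx
    ext y
    simp only [Finset.mem_filter, Finset.mem_singleton]
    constructor
    · rintro ⟨hy, hzero⟩
      rw [hval y hy] at hzero
      have hby := hβ y hy
      have : t x = t y := by
        rcases mul_eq_zero.mp hzero with h | h
        · exact absurd h hby
        · linarith
      by_contra hxy
      exact htne y hy x hx hxy this.symm
    · intro h
      subst h
      exact ⟨hx, hroot _ hx⟩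
  have hvw : ∀ x ∈ Q, v x + w x + 1 = m := by
    intro x hx
    have h1 := Finset.card_filter_add_card_filter_not
      (s := Q) (p := fun y => 0 < α y + t x * β y)
    have h2 : Q.filter (fun y => ¬ 0 < α y + t x * β y)
        = (Q.filter fun y => α y + t x * β y < 0) ∪ (Q.filter fun y => α y + t x * β y = 0) := by
      ext y
      simp only [Finset.mem_filter, Finset.mem_union, not_lt]
      constructor
      · rintro ⟨hy, hle⟩
        rcases lt_or_eq_of_le hle with h | h
        · exact Or.inl ⟨hy, h⟩
        · exact Or.inr ⟨hy, h⟩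
      · rintro (⟨hy, h⟩ | ⟨hy, h⟩)
        · exact ⟨hy, le_of_lt h⟩
        · exact ⟨hy, le_of_eq h⟩
    have hdisj : Disjoint (Q.filter fun y => α y + t x * β y < 0)
        (Q.filter fun y => α y + t x * β y = 0) := by
      apply Finset.disjoint_left.mpr
      intro y hy1 hy2
      simp only [Finset.mem_filter] at hy1 hy2
      linarith [hy1.2, hy2.2]
    rw [h2, Finset.card_union_of_disjoint hdisj, hzero_filter x hx] at h1
    simp only [Finset.card_singleton] at h1
    rw [hvdef, hwdef, hmdef]
    simp only at h1 ⊢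
    omega
  -- c around an event
  have hK3 : ∀ x ∈ Q,
      (0 < β x → c (ρ x) = v x ∧ c (ρ x + 1) = v x + 1) ∧
      (β x < 0 → c (ρ x) = v x + 1 ∧ c (ρ x + 1) = v x) := by
    intro x hx
    have hB : v x = (Q.filter fun y => if 0 < β y then ρ y < ρ x else ρ x < ρ y).card := by
      rw [hvdef]
      simp only
      rw [hvx x hx]
    have hA : (Q.filter fun y => if 0 < β y then ρ y < ρ x else ρ x ≤ ρ y)
        = if 0 < β x then (Q.filter fun y => if 0 < β y then ρ y < ρ x else ρ x < ρ y)
          else insert x (Q.filter fun y => if 0 < β y then ρ y < ρ x else ρ x < ρ y) := by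
      split_ifs with hbx
      · apply Finset.filter_congr
        intro y hy
        split_ifs with hby
        · rfl
        · constructor
          · intro h
            rcases lt_or_eq_of_le h with h' | h'
            · exact h'
            · exact absurd (hρinj x hx y hy h') (by rintro rfl; exact hby hbx)
          · exact le_of_lt
      · ext y
        simp only [Finset.mem_insert, Finset.mem_filter]
        constructor
        · rintro ⟨hy, hcond⟩
          by_cases hyx : y = x
          · exact Or.inl hyx
          · refine Or.inr ⟨hy, ?_⟩
            split_ifs with hby
            · rw [if_pos hby] at hcond; exact hcond
            · rw [if_neg hby] at hcond
              rcases lt_or_eq_of_le hcond with h' | h'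
              · exact h'
              · exact absurd (hρinj x hx y hy h') (fun h => hyx h.symm)
        · rintro (rfl | ⟨hy, hcond⟩)
          · exact ⟨hx, by rw [if_neg hbx]⟩
          · refine ⟨hy, ?_⟩
            split_ifs with hby
            · rw [if_pos hby] at hcond; exact hcond
            · rw [if_neg hby] at hcond; exact le_of_lt hcond
    have hA' : (Q.filter fun y => if 0 < β y then ρ y < ρ x + 1 else ρ x + 1 ≤ ρ y)
        = if 0 < β x then insert x (Q.filter fun y => if 0 < β y then ρ y < ρ x else ρ x < ρ y)
          else (Q.filter fun y => if 0 < β y then ρ y < ρ x else ρ x < ρ y) := by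
      split_ifs with hbx
      · ext y
        simp only [Finset.mem_insert, Finset.mem_filter]
        constructor
        · rintro ⟨hy, hcond⟩
          by_cases hyx : y = x
          · exact Or.inl hyx
          · refine Or.inr ⟨hy, ?_⟩
            split_ifs with hby
            · rw [if_pos hby] at hcond
              rcases Nat.lt_succ_iff_lt_or_eq.mp hcond with h' | h'
              · exact h'
              · exact absurd (hρinj y hy x hx h') hyx
            · rw [if_neg hby] at hcond; omega
        · rintro (rfl | ⟨hy, hcond⟩)
          · exact ⟨hx, by rw [if_pos hbx]; omega⟩
          · refine ⟨hy, ?_⟩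
            split_ifs with hby
            · rw [if_pos hby] at hcond; omega
            · rw [if_neg hby] at hcond; omega
      · apply Finset.filter_congr
        intro y hy
        split_ifs with hby
        · constructor
          · intro h
            rcases Nat.lt_succ_iff_lt_or_eq.mp h with h' | h'
            · exact h'
            · exact absurd (hρinj y hy x hx h') (by rintro rfl; exact hbx hby)
          · omega
        · omega
    have hxnotmem : x ∉ (Q.filter fun y => if 0 < β y then ρ y < ρ x else ρ x < ρ y) := by
      simp only [Finset.mem_filter]
      rintro ⟨-, hcond⟩
      split_ifs at hcond <;> omega
    constructor
    · intro hbx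
      constructor
      · show (Q.filter fun y => if 0 < β y then ρ y < ρ x else ρ x ≤ ρ y).card = v x
        rw [hA, if_pos hbx, hB]
      · show (Q.filter fun y => if 0 < β y then ρ y < ρ x + 1 else ρ x + 1 ≤ ρ y).card = v x + 1
        rw [hA', if_pos hbx, Finset.card_insert_of_notMem hxnotmem, hB]
    · intro hbx
      have hbx' : ¬ 0 < β x := not_lt.mpr (le_of_lt hbx)
      constructor
      · show (Q.filter fun y => if 0 < β y then ρ y < ρ x else ρ x ≤ ρ y).card = v x + 1
        rw [hA, if_neg hbx', Finset.card_insert_of_notMem hxnotmem, hB]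
      · show (Q.filter fun y => if 0 < β y then ρ y < ρ x + 1 else ρ x + 1 ≤ ρ y).card = v x
        rw [hA', if_neg hbx', hB]
  -- steps
  have hK4 : ∀ i < m, c (i + 1) ≤ c i + 1 ∧ c i ≤ c (i + 1) + 1 := by
    intro i hi
    obtain ⟨x, hx, rfl⟩ := hsurj i hi
    have h3 := hK3 x hx
    rcases lt_or_gt_of_ne (hβ x hx) with hneg | hpos
    · obtain ⟨h1, h2⟩ := h3.2 hneg
      omega
    · obtain ⟨h1, h2⟩ := h3.1 hpos
      omega
  -- endpoints
  have hc0m : c 0 + c m = m := by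
    have h1 := Finset.card_filter_add_card_filter_not
      (s := Q) (p := fun y => 0 < β y)
    have he0 : c 0 = (Q.filter fun y => ¬ 0 < β y).card := by
      show (Q.filter fun y => if 0 < β y then ρ y < 0 else 0 ≤ ρ y).card = _
      congr 1
      apply Finset.filter_congr
      intro y hy
      split_ifs with hby <;> simp [hby]
    have hem : c m = (Q.filter fun y => 0 < β y).card := by
      show (Q.filter fun y => if 0 < β y then ρ y < m else m ≤ ρ y).card = _
      congr 1
      apply Finset.filter_congr
      intro y hy
      have := hρlt y hy
      split_ifs with hby <;> simp [hby] <;> omega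
    omega
  -- a gap with small value
  have hgap : ∃ g ≤ m, c g ≤ j := by
    set g1 := (Q.filter fun x => t x < 0).card with hg1
    set g2 := (Q.filter fun x => t x ≤ 0).card with hg2
    have hg1le : g1 ≤ m := Finset.card_filter_le _ _
    have hg2le : g2 ≤ m := Finset.card_filter_le _ _
    have hchar1 : ∀ y ∈ Q, (ρ y < g1 ↔ t y < 0) := by
      intro y hy
      constructor
      · intro h
        by_contra hc
        push_neg at hc
        have := L2 y 0 hc
        omega
      · intro h
        exact L1 y hy 0 h
    have hchar2 : ∀ y ∈ Q, (ρ y < g2 ↔ t y ≤ 0) := by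
      intro y hy
      constructor
      · intro h
        by_contra hc
        push_neg at hc
        have := L4 y 0 hc
        omega
      · intro h
        exact L3 y hy 0 h
    have hαt : ∀ y ∈ Q, α y = β y * (0 - t y) := by
      intro y hy
      have := hval y hy 0
      linarith
    have hcg1 : c g1 = (Q.filter fun y => if 0 < β y then t y < 0 else 0 ≤ t y).card := by
      show (Q.filter fun y => if 0 < β y then ρ y < g1 else g1 ≤ ρ y).card = _
      congr 1
      apply Finset.filter_congr
      intro y hy
      have h1 := hchar1 y hy
      split_ifs with hby
      · exact h1
      · constructor
        · intro h; by_contra hc; push_neg at hc; rw [← h1] at hc; omega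
        · intro h; by_contra hc; push_neg at hc; rw [h1] at hc; linarith
    have hcg2 : c g2 = (Q.filter fun y => if 0 < β y then t y ≤ 0 else 0 < t y).card := by
      show (Q.filter fun y => if 0 < β y then ρ y < g2 else g2 ≤ ρ y).card = _
      congr 1
      apply Finset.filter_congr
      intro y hy
      have h1 := hchar2 y hy
      split_ifs with hby
      · exact h1
      · constructor
        · intro h; by_contra hc; push_neg at hc; rw [← h1] at hc; omega
        · intro h; by_contra hc; push_neg at hc; rw [h1] at hc; linarith
    by_contra hcon
    push_neg at hcon
    have hj1 := hcon g1 hg1le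
    have hj2 := hcon g2 hg2le
    -- both filtered sets have an element outside the start set
    have hsub1 : ¬ (Q.filter fun y => if 0 < β y then t y < 0 else 0 ≤ t y)
        ⊆ (Q.filter fun x => 0 < α x) := by
      intro hsub
      have := Finset.card_le_card hsub
      omega
    have hsub2 : ¬ (Q.filter fun y => if 0 < β y then t y ≤ 0 else 0 < t y)
        ⊆ (Q.filter fun x => 0 < α x) := by
      intro hsub
      have := Finset.card_le_card hsub
      omega
    obtain ⟨y1, hy1mem, hy1not⟩ := Finset.not_subset.mp hsub1
    obtain ⟨y2, hy2mem, hy2not⟩ := Finset.not_subset.mp hsub2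
    simp only [Finset.mem_filter] at hy1mem hy2mem hy1not hy2not
    have hy1Q := hy1mem.1
    have hy2Q := hy2mem.1
    have hy1α : ¬ 0 < α y1 := fun h => hy1not ⟨hy1Q, h⟩
    have hy2α : ¬ 0 < α y2 := fun h => hy2not ⟨hy2Q, h⟩
    rw [hαt y1 hy1Q] at hy1α
    rw [hαt y2 hy2Q] at hy2α
    have h1 : β y1 < 0 ∧ t y1 = 0 := by
      rcases lt_or_gt_of_ne (hβ y1 hy1Q) with hneg | hpos
      · have hcond := hy1mem.2
        rw [if_neg (not_lt.mpr (le_of_lt hneg))] at hcond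
        constructor
        · exact hneg
        · by_contra hne
          have : 0 < t y1 := lt_of_le_of_ne hcond (Ne.symm hne)
          apply hy1α
          nlinarith
      · have hcond := hy1mem.2
        rw [if_pos hpos] at hcond
        exact absurd (by nlinarith : (0:ℝ) < β y1 * (0 - t y1)) hy1α
    have h2 : 0 < β y2 ∧ t y2 = 0 := by
      rcases lt_or_gt_of_ne (hβ y2 hy2Q) with hneg | hpos
      · have hcond := hy2mem.2
        rw [if_neg (not_lt.mpr (le_of_lt hneg))] at hcond
        exact absurd (by nlinarith : (0:ℝ) < β y2 * (0 - t y2)) hy2α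
      · have hcond := hy2mem.2
        rw [if_pos hpos] at hcond
        constructor
        · exact hpos
        · by_contra hne
          have : t y2 < 0 := lt_of_le_of_ne hcond hne
          apply hy2α
          nlinarith
    have hne : y1 ≠ y2 := by
      intro h
      rw [h] at h1
      linarith [h1.1, h2.1]
    exact htne y1 hy1Q y2 hy2Q hne (by rw [h1.2, h2.2])
  obtain ⟨g, hgm, hcg⟩ := hgap
  have hm0 : 0 < m := by omega
  -- uniform description of second half of arc 1
  set D1 : ℕ → ℕ := fun i => if i ≤ m - g then c (g + i) else m - c (i - (m - g)) with hD1
  have hD1alt : ∀ i, m - g ≤ i → i ≤ m → D1 i = m - c (i - (m - g)) := by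
    intro i h1 h2
    rcases eq_or_lt_of_le h1 with heq | hlt
    · rw [hD1]
      simp only [← heq, if_pos (le_refl _), Nat.sub_self]
      have : g + (m - g) = m := by omega
      rw [this]
      omega
    · rw [hD1]
      simp only [if_neg (by omega : ¬ i ≤ m - g)]
  have hD1_0 : D1 0 = c g := by
    rw [hD1]
    simp only [if_pos (Nat.zero_le _), Nat.add_zero]
  have hD1_m : D1 m = m - c g := by
    rw [hD1alt m (by omega) (le_refl m)]
    congr 1
    congr 1
    omega
  have hD1step : ∀ i < m, D1 (i + 1) ≤ D1 i + 1 := by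
    intro i hi
    by_cases hc1 : i + 1 ≤ m - g
    · have hc2 : i ≤ m - g := by omega
      rw [hD1]
      simp only [if_pos hc1, if_pos hc2]
      have := (hK4 (g + i) (by omega)).1
      have : c (g + i + 1) ≤ c (g + i) + 1 := this
      have hgi : g + (i + 1) = g + i + 1 := by omega
      rw [hgi]
      omega
    · have hc2 : m - g ≤ i := by omega
      rw [hD1alt (i + 1) (by omega) (by omega), hD1alt i hc2 (by omega)]
      set k := i - (m - g) with hk
      have hk1 : i + 1 - (m - g) = k + 1 := by omega
      rw [hk1]
      have hkm : k < m := by omega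
      have := (hK4 k hkm).2
      have h1 := hcle k
      have h2 := hcle (k + 1)
      omega
  have harc1 : ∃ x ∈ Q, (v x = j ∧ g ≤ ρ x) ∨ (w x = j ∧ v x = m - 1 - j ∧ ρ x < g) := by
    obtain ⟨i, hi, hle, heq⟩ := crossing D1 m j (by omega) (by rw [hD1_m]; omega) hD1step
    by_cases hc1 : i + 1 ≤ m - g
    · have hc2 : i ≤ m - g := by omega
      rw [hD1] at hle heq
      simp only [if_pos hc1, if_pos hc2] at hle heq
      have hgi : g + (i + 1) = g + i + 1 := by omega
      rw [hgi] at heq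
      obtain ⟨x, hx, hρx⟩ := hsurj (g + i) (by omega)
      have h3 := hK3 x hx
      refine ⟨x, hx, Or.inl ⟨?_, by omega⟩⟩
      rcases lt_or_gt_of_ne (hβ x hx) with hneg | hpos
      · obtain ⟨e1, e2⟩ := h3.2 hneg
        rw [hρx] at e1 e2
        omega
      · obtain ⟨e1, e2⟩ := h3.1 hpos
        rw [hρx] at e1 e2
        omega
    · have hc2 : m - g ≤ i := by omega
      rw [hD1alt (i + 1) (by omega) (by omega)] at heq
      rw [hD1alt i hc2 (by omega)] at hle
      set k := i - (m - g) with hk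
      have hk1 : i + 1 - (m - g) = k + 1 := by omega
      rw [hk1] at heq
      have hkg : k < g := by omega
      have hck : m - j ≤ c k := by
        have := hcle k
        omega
      have hck1 : c (k + 1) = m - j - 1 := by
        have := hcle (k + 1)
        omega
      obtain ⟨x, hx, hρx⟩ := hsurj k (by omega)
      have h3 := hK3 x hx
      have hvwx := hvw x hx
      refine ⟨x, hx, Or.inr ⟨?_, ?_, by omega⟩⟩
      · rcases lt_or_gt_of_ne (hβ x hx) with hneg | hpos
        · obtain ⟨e1, e2⟩ := h3.2 hneg
          rw [hρx] at e1 e2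
          omega
        · obtain ⟨e1, e2⟩ := h3.1 hpos
          rw [hρx] at e1 e2
          omega
      · rcases lt_or_gt_of_ne (hβ x hx) with hneg | hpos
        · obtain ⟨e1, e2⟩ := h3.2 hneg
          rw [hρx] at e1 e2
          omega
        · obtain ⟨e1, e2⟩ := h3.1 hpos
          rw [hρx] at e1 e2
          omega
  -- arc 2
  set D2 : ℕ → ℕ := fun i => if i ≤ g then c (g - i) else m - c (m - (i - g)) with hD2
  have hD2alt : ∀ i, g ≤ i → i ≤ m → D2 i = m - c (m - (i - g)) := by
    intro i h1 h2
    rcases eq_or_lt_of_le h1 with heq | hlt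
    · rw [hD2]
      simp only [← heq, if_pos (le_refl _), Nat.sub_self, Nat.sub_zero]
      have h3 : c 0 + c m = m := hc0m
      have h4 := hcle m
      omega
    · rw [hD2]
      simp only [if_neg (by omega : ¬ i ≤ g)]
  have hD2_0 : D2 0 = c g := by
    rw [hD2]
    simp only [if_pos (Nat.zero_le _), Nat.sub_zero]
  have hD2_m : D2 m = m - c g := by
    rw [hD2alt m hgm (le_refl m)]
    have : m - (m - g) = g := by omega
    rw [this]
  have hD2step : ∀ i < m, D2 (i + 1) ≤ D2 i + 1 := by
    intro i hi
    by_cases hc1 : i + 1 ≤ g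
    · have hc2 : i ≤ g := by omega
      rw [hD2]
      simp only [if_pos hc1, if_pos hc2]
      have hgi : g - i = (g - (i + 1)) + 1 := by omega
      have := (hK4 (g - (i + 1)) (by omega)).2
      rw [hgi]
      omega
    · have hc2 : g ≤ i := by omega
      rw [hD2alt (i + 1) (by omega) (by omega), hD2alt i hc2 (by omega)]
      set k := m - (i + 1 - g) with hk
      have hk1 : m - (i - g) = k + 1 := by omega
      rw [hk1]
      have hkm : k < m := by omega
      have := (hK4 k hkm).1
      have h1 := hcle k
      have h2 := hcle (k + 1)
      omega
  have harc2 : ∃ x ∈ Q, (v x = j ∧ ρ x < g) ∨ (w x = j ∧ v x = m - 1 - j ∧ g ≤ ρ x) := by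
    obtain ⟨i, hi, hle, heq⟩ := crossing D2 m j (by rw [hD2_0]; omega)
      (by rw [hD2_m]; omega) hD2step
    by_cases hc1 : i + 1 ≤ g
    · have hc2 : i ≤ g := by omega
      rw [hD2] at hle heq
      simp only [if_pos hc1, if_pos hc2] at hle heq
      have hgi : g - i = (g - (i + 1)) + 1 := by omega
      rw [hgi] at hle
      obtain ⟨x, hx, hρx⟩ := hsurj (g - (i + 1)) (by omega)
      have h3 := hK3 x hx
      refine ⟨x, hx, Or.inl ⟨?_, by omega⟩⟩
      rcases lt_or_gt_of_ne (hβ x hx) with hneg | hpos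
      · obtain ⟨e1, e2⟩ := h3.2 hneg
        rw [hρx] at e1 e2
        omega
      · obtain ⟨e1, e2⟩ := h3.1 hpos
        rw [hρx] at e1 e2
        omega
    · have hc2 : g ≤ i := by omega
      rw [hD2alt (i + 1) (by omega) (by omega)] at heq
      rw [hD2alt i hc2 (by omega)] at hle
      set k := m - (i + 1 - g) with hk
      have hk1 : m - (i - g) = k + 1 := by omega
      rw [hk1] at hle
      have hkm : k < m := by omega
      have hck1 : m - j ≤ c (k + 1) := by
        have := hcle (k + 1)
        omega
      have hck : c k = m - j - 1 := by
        have := hcle k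
        omega
      obtain ⟨x, hx, hρx⟩ := hsurj k hkm
      have h3 := hK3 x hx
      have hvwx := hvw x hx
      refine ⟨x, hx, Or.inr ⟨?_, ?_, by omega⟩⟩
      · rcases lt_or_gt_of_ne (hβ x hx) with hneg | hpos
        · obtain ⟨e1, e2⟩ := h3.2 hneg
          rw [hρx] at e1 e2
          omega
        · obtain ⟨e1, e2⟩ := h3.1 hpos
          rw [hρx] at e1 e2
          omega
      · rcases lt_or_gt_of_ne (hβ x hx) with hneg | hpos
        · obtain ⟨e1, e2⟩ := h3.2 hneg
          rw [hρx] at e1 e2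
          omega
        · obtain ⟨e1, e2⟩ := h3.1 hpos
          rw [hρx] at e1 e2
          omega
  -- assemble
  obtain ⟨r, hrQ, hr⟩ := harc1
  obtain ⟨s, hsQ, hs⟩ := harc2
  have hrs : r ≠ s := by
    intro h
    subst h
    rcases hr with ⟨hv1, hρ1⟩ | ⟨hw1, hv1, hρ1⟩ <;>
      rcases hs with ⟨hv2, hρ2⟩ | ⟨hw2, hv2, hρ2⟩ <;> omega
  have hgoal : ∀ x ∈ Q, (v x = j ∨ w x = j) →
      (∃ t' : ℝ, α x + t' * β x = 0 ∧
        ((Q.filter fun y => 0 < α y + t' * β y).card = j ∨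
         (Q.filter fun y => α y + t' * β y < 0).card = j)) := by
    intro x hx hvx'
    refine ⟨t x, hroot x hx, ?_⟩
    rcases hvx' with h | h
    · exact Or.inl h
    · exact Or.inr h
  refine ⟨r, hrQ, s, hsQ, hrs, ?_, ?_⟩
  · apply hgoal r hrQ
    rcases hr with ⟨h, -⟩ | ⟨h, -, -⟩
    · exact Or.inl h
    · exact Or.inr h
  · apply hgoal s hsQ
    rcases hs with ⟨h, -⟩ | ⟨h, -, -⟩
    · exact Or.inl h
    · exact Or.inr h





end Aux

namespace Aux

/-- Four distinct points of `P` on a common plane contradict general position. -/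
lemma genpos4 (P : Finset V3) (hgen : GenPos3 P) (p q x y : V3)
    (hp : p ∈ P) (hq : q ∈ P) (hx : x ∈ P) (hy : y ∈ P)
    (hpq : p ≠ q) (hpx : p ≠ x) (hpy : p ≠ y) (hqx : q ≠ x) (hqy : q ≠ y) (hxy : x ≠ y)
    (a : V3) (ha : a ≠ 0) (c : ℝ)
    (h1 : dot3 a p = c) (h2 : dot3 a q = c) (h3 : dot3 a x = c) (h4 : dot3 a y = c) :
    False := by
  classical
  apply hgen ({p, q, x, y} : Finset V3)
  · intro z hz
    simp only [Finset.mem_insert, Finset.mem_singleton] at hz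
    rcases hz with rfl | rfl | rfl | rfl <;> assumption
  · rw [Finset.card_insert_of_notMem (by simp [hpq, hpx, hpy]),
      Finset.card_insert_of_notMem (by simp [hqx, hqy]),
      Finset.card_insert_of_notMem (by simp [hxy]), Finset.card_singleton]
  · apply coplanar_of_plane ha c
    intro z hz
    simp only [Finset.coe_insert, Finset.coe_singleton, Set.mem_insert_iff,
      Set.mem_singleton_iff] at hz
    rcases hz with rfl | rfl | rfl | rfl <;> assumption

end Aux

open Aux in
/-- Every segment of depth at most `j` (with `2j ≤ n − 4`) lies in at least two
`j`-facets of `P`. -/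
theorem stmt5 (P : Finset V3) (n : ℕ) (hn : P.card = n) (hn4 : 4 ≤ n)
    (hgen : GenPos3 P) (j : ℕ) (hj : 2 * j + 4 ≤ n)
    (p q : V3) (hp : p ∈ P) (hq : q ∈ P) (hpq : p ≠ q)
    (hdepth : ¬ DepthAtLeast P p q (j + 1)) :
    ∃ r ∈ P, ∃ s ∈ P, r ≠ s ∧ r ≠ p ∧ r ≠ q ∧ s ≠ p ∧ s ≠ q ∧
      IsJFacetThrough P j p q r ∧ IsJFacetThrough P j p q s := by
  classical
  -- extract a starting plane with few points on its positive side
  rw [DepthAtLeast] at hdepth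
  push_neg at hdepth
  obtain ⟨a, hane, haeq, hbad⟩ := hdepth
  have hwlog : ∃ a0 : V3, a0 ≠ 0 ∧ dot3 a0 p = dot3 a0 q ∧
      sideGT P a0 (dot3 a0 p) ≤ j := by
    rcases le_or_gt (j + 1) (sideGT P a (dot3 a p)) with h | h
    · have hLT := hbad h
      refine ⟨-a, neg_ne_zero.mpr hane, by rw [dot3_neg_left, dot3_neg_left, haeq], ?_⟩
      rw [dot3_neg_left, ← sideLT_eq_sideGT_neg]
      omega
    · exact ⟨a, hane, haeq, by omega⟩
  obtain ⟨a0, ha0ne, ha0eq, hside⟩ := hwlog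
  -- the auxiliary point set
  set Q : Finset V3 := (P.erase p).erase q with hQdef
  have hQmem : ∀ x, x ∈ Q ↔ x ∈ P ∧ x ≠ p ∧ x ≠ q := by
    intro x
    rw [hQdef, Finset.mem_erase, Finset.mem_erase]
    tauto
  have hQcard : Q.card = n - 2 := by
    rw [hQdef, Finset.card_erase_of_mem (Finset.mem_erase.mpr ⟨Ne.symm hpq, hq⟩),
      Finset.card_erase_of_mem hp, hn]
    omega
  -- the direction of the segment
  set d : V3 := q - p with hddef
  have hd : d ≠ 0 := sub_ne_zero_of_ne (Ne.symm hpq)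
  have hda0 : dot3 a0 d = 0 := by rw [hddef, dot3_sub_right, ha0eq, sub_self]
  -- second direction
  set F : Finset V3 := Q.image (fun x => x - p) with hFdef
  have hF : ∀ y ∈ F, ∀ μ : ℝ, y ≠ μ • d := by
    intro y hy μ hyeq
    rw [hFdef, Finset.mem_image] at hy
    obtain ⟨x, hxQ, rfl⟩ := hy
    obtain ⟨hxP, hxp, hxq⟩ := (hQmem x).mp hxQ
    exact not_collinear_pt P hgen (by omega) p q x hp hq hxP hpq hxp hxq μ (by rw [hyeq, hddef])
  obtain ⟨a1, ha1d, ha1F, ha1t⟩ := exists_a1 d hd a0 ha0ne hda0 F hF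
  have ha1eq : dot3 a1 p = dot3 a1 q := by
    rw [hddef, dot3_sub_right] at ha1d
    linarith
  -- linear coordinates
  set α : V3 → ℝ := fun x => dot3 a0 x - dot3 a0 p with hαdef
  set β : V3 → ℝ := fun x => dot3 a1 x - dot3 a1 p with hβdef
  have hβne : ∀ x ∈ Q, β x ≠ 0 := by
    intro x hxQ
    have : x - p ∈ F := by
      rw [hFdef, Finset.mem_image]
      exact ⟨x, hxQ, rfl⟩
    have h2 := ha1F (x - p) this
    rw [dot3_sub_right] at h2
    rw [hβdef]
    simpa [dot3_comm] using (by intro hc; apply h2; rw [dot3_comm a1 x, dot3_comm a1 p] at hc ⊢; linarith : ¬ (dot3 a1 x - dot3 a1 p = 0))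
  have heval : ∀ (s : ℝ) (x : V3),
      dot3 (a0 + s • a1) x - dot3 (a0 + s • a1) p = α x + s * β x := by
    intro s x
    rw [dot3_add_left, dot3_add_left, dot3_smul_left, dot3_smul_left, hαdef, hβdef]
    ring
  have hplaneeq : ∀ s : ℝ, dot3 (a0 + s • a1) p = dot3 (a0 + s • a1) q := by
    intro s
    have h1 := heval s q
    have hαq : α q = 0 := by rw [hαdef]; simp [ha0eq]
    have hβq : β q = 0 := by rw [hβdef]; simp [ha1eq]
    rw [hαq, hβq] at h1
    linarith
  -- the two count filters
  have hfilterGT : ∀ s : ℝ,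
      P.filter (fun x => dot3 (a0 + s • a1) p < dot3 (a0 + s • a1) x)
        = Q.filter (fun x => 0 < α x + s * β x) := by
    intro s
    ext x
    simp only [Finset.mem_filter]
    constructor
    · rintro ⟨hxP, hlt⟩
      have hxp : x ≠ p := by
        rintro rfl
        exact lt_irrefl _ hlt
      have hxq : x ≠ q := by
        rintro rfl
        rw [← hplaneeq s] at hlt
        exact lt_irrefl _ hlt
      refine ⟨(hQmem x).mpr ⟨hxP, hxp, hxq⟩, ?_⟩
      have := heval s x
      linarith
    · rintro ⟨hxQ, hpos⟩
      obtain ⟨hxP, -, -⟩ := (hQmem x).mp hxQ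
      refine ⟨hxP, ?_⟩
      have := heval s x
      linarith
  have hfilterLT : ∀ s : ℝ,
      P.filter (fun x => dot3 (a0 + s • a1) x < dot3 (a0 + s • a1) p)
        = Q.filter (fun x => α x + s * β x < 0) := by
    intro s
    ext x
    simp only [Finset.mem_filter]
    constructor
    · rintro ⟨hxP, hlt⟩
      have hxp : x ≠ p := by
        rintro rfl
        exact lt_irrefl _ hlt
      have hxq : x ≠ q := by
        rintro rfl
        rw [← hplaneeq s] at hlt
        exact lt_irrefl _ hlt
      refine ⟨(hQmem x).mpr ⟨hxP, hxp, hxq⟩, ?_⟩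
      have := heval s x
      linarith
    · rintro ⟨hxQ, hpos⟩
      obtain ⟨hxP, -, -⟩ := (hQmem x).mp hxQ
      refine ⟨hxP, ?_⟩
      have := heval s x
      linarith
  -- pairwise independence from general position
  have hind : ∀ x ∈ Q, ∀ y ∈ Q, x ≠ y → α x * β y ≠ α y * β x := by
    intro x hxQ y hyQ hxy hcontra
    obtain ⟨hxP, hxp, hxq⟩ := (hQmem x).mp hxQ
    obtain ⟨hyP, hyp, hyq⟩ := (hQmem y).mp hyQ
    have hbx := hβne x hxQ
    have hby := hβne y hyQ
    set s : ℝ := -(α x) / β x with hsdef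
    have hrx : α x + s * β x = 0 := by
      rw [hsdef]
      field_simp
      ring
    have hry : α y + s * β y = 0 := by
      rw [hsdef]
      field_simp
      linarith [hcontra]
    have hAne := ha1t s
    have hcp : dot3 (a0 + s • a1) p = dot3 (a0 + s • a1) p := rfl
    apply genpos4 P hgen p q x y hp hq hxP hyP hpq (Ne.symm hxp) (Ne.symm hyp)
      (Ne.symm hxq) (Ne.symm hyq) hxy (a0 + s • a1) hAne (dot3 (a0 + s • a1) p)
    · rfl
    · exact (hplaneeq s).symm
    · have := heval s x
      linarith
    · have := heval s y
      linarith
  -- starting count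
  have hstart : (Q.filter fun x => 0 < α x).card ≤ j := by
    have h1 : sideGT P a0 (dot3 a0 p) = (Q.filter fun x => 0 < α x).card := by
      rw [sideGT_eq_card]
      have h2 := hfilterGT 0
      simp only [zero_smul, add_zero] at h2
      rw [h2]
      congr 1
      apply Finset.filter_congr
      intro x hx
      constructor
      · intro h; linarith
      · intro h; linarith
    omega
  -- apply the combinatorial core lemma
  obtain ⟨r, hrQ, s, hsQ, hrs, hrfacet, hsfacet⟩ :=
    core Q α β j (by omega) hβne hind hstart
  -- convert facet data into IsJFacetThrough
  have hfacet : ∀ x ∈ Q, (∃ t : ℝ, α x + t * β x = 0 ∧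
      ((Q.filter fun y => 0 < α y + t * β y).card = j ∨
       (Q.filter fun y => α y + t * β y < 0).card = j)) → IsJFacetThrough P j p q x := by
    intro x hxQ ⟨t, hroot, hcount⟩
    have hAne := ha1t t
    have hdotx : dot3 (a0 + t • a1) x = dot3 (a0 + t • a1) p := by
      have := heval t x
      linarith
    rcases hcount with hc | hc
    · refine ⟨a0 + t • a1, hAne, hplaneeq t, ?_, ?_⟩
      · rw [← hplaneeq t, hdotx]
      · rw [sideGT_eq_card, hfilterGT t, hc]
    · refine ⟨-(a0 + t • a1), neg_ne_zero.mpr hAne, ?_, ?_, ?_⟩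
      · rw [dot3_neg_left, dot3_neg_left, hplaneeq t]
      · rw [dot3_neg_left, dot3_neg_left, hdotx, hplaneeq t]
      · rw [dot3_neg_left, ← sideLT_eq_sideGT_neg, sideLT_eq_card, hfilterLT t, hc]
  obtain ⟨hrP, hrp, hrq⟩ := (hQmem r).mp hrQ
  obtain ⟨hsP, hsp, hsq⟩ := (hQmem s).mp hsQ
  exact ⟨r, hrP, s, hsP, hrs, hrp, hrq, hsp, hsq,
    hfacet r hrQ hrfacet, hfacet s hsQ hsfacet⟩
end

section
/- Let P ⊂ ℝ³ be a set of n ≥ 4 points in convex and general position. A segment uv with u, v ∈ P has depth exactly 1 if and only if uv is not an edge of conv(P) but there exists a point p ∈ P \ {u,v} such that uv is an edge of conv(P \ {p}). -/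
/-- `uv` is an edge of the convex hull of the finite set `S`: there is a supporting
plane through `u` and `v` containing no other point of `S`, with all remaining points
strictly on one side. -/
def HullEdge (S : Finset V3) (u v : V3) : Prop :=
  u ∈ S ∧ v ∈ S ∧ u ≠ v ∧
    ∃ a : V3, a ≠ 0 ∧ dot3 a u = dot3 a v ∧
      ∀ x ∈ S, x ≠ u → x ≠ v → dot3 a u < dot3 a x

/-! ### Auxiliary algebraic lemmas -/

lemma dot3_sub (a x y : V3) : dot3 a (x - y) = dot3 a x - dot3 a y := by
  simp [dot3]; ring

lemma dot3_add_smul (a b : V3) (t : ℝ) (x : V3) :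
    dot3 (a + t • b) x = dot3 a x + t * dot3 b x := by
  simp [dot3, Prod.smul_def, smul_eq_mul]; ring

lemma dot3_neg (a x : V3) : dot3 (-a) x = - dot3 a x := by
  simp [dot3]; ring

lemma dot3_self_pos {a : V3} (ha : a ≠ 0) : 0 < dot3 a a := by
  obtain ⟨a1, a2, a3⟩ := a
  have h : ¬(a1 = 0 ∧ a2 = 0 ∧ a3 = 0) := by
    intro ⟨h1, h2, h3⟩; exact ha (by simp [h1, h2, h3, Prod.ext_iff])
  push_neg at h
  simp only [dot3]
  rcases eq_or_ne a1 0 with h1 | h1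
  · rcases eq_or_ne a2 0 with h2 | h2
    · have h3 := h h1 h2
      nlinarith [mul_self_nonneg a1, mul_self_nonneg a2, mul_self_pos.mpr h3]
    · nlinarith [mul_self_nonneg a1, mul_self_nonneg a3, mul_self_pos.mpr h2]
  · nlinarith [mul_self_nonneg a2, mul_self_nonneg a3, mul_self_pos.mpr h1]

/-- Cross product on triples. -/
def cross3 (d e : V3) : V3 :=
  (d.2.1 * e.2.2 - d.2.2 * e.2.1, d.2.2 * e.1 - d.1 * e.2.2, d.1 * e.2.1 - d.2.1 * e.1)

lemma cross3_dot_left (d e : V3) : dot3 (cross3 (cross3 d e) d) d = 0 := by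
  simp [dot3, cross3]; ring

lemma cross3_dot_right (d e : V3) :
    dot3 (cross3 (cross3 d e) d) e = dot3 (cross3 d e) (cross3 d e) := by
  simp [dot3, cross3]; ring

lemma smul_of_cross3_eq_zero {d e : V3} (hd : d ≠ 0) (h : cross3 d e = 0) :
    ∃ k : ℝ, e = k • d := by
  obtain ⟨d1, d2, d3⟩ := d
  obtain ⟨e1, e2, e3⟩ := e
  obtain ⟨h1, h2, h3⟩ : d2 * e3 - d3 * e2 = 0 ∧ d3 * e1 - d1 * e3 = 0 ∧ d1 * e2 - d2 * e1 = 0 := by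
    simpa [cross3, Prod.ext_iff] using h
  rcases eq_or_ne d1 0 with hd1 | hd1
  · rcases eq_or_ne d2 0 with hd2 | hd2
    · have hd3 : d3 ≠ 0 := by
        intro hd3; exact hd (by simp [hd1, hd2, hd3, Prod.ext_iff])
      subst hd1; subst hd2
      refine ⟨e3 / d3, ?_⟩
      have he1 : e1 = 0 := (mul_eq_zero.mp (by linarith : d3 * e1 = 0)).resolve_left hd3
      have he2 : e2 = 0 := (mul_eq_zero.mp (by linarith : d3 * e2 = 0)).resolve_left hd3
      simp only [Prod.smul_def, smul_eq_mul, Prod.ext_iff]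
      refine ⟨by simp [he1], by simp [he2], by field_simp⟩
    · subst hd1
      refine ⟨e2 / d2, ?_⟩
      have he1 : e1 = 0 := (mul_eq_zero.mp (by linarith : d2 * e1 = 0)).resolve_left hd2
      simp only [Prod.smul_def, smul_eq_mul, Prod.ext_iff]
      refine ⟨by simp [he1], by field_simp, ?_⟩
      field_simp
      linear_combination h1
  · refine ⟨e1 / d1, ?_⟩
    simp only [Prod.smul_def, smul_eq_mul, Prod.ext_iff]
    refine ⟨by field_simp, ?_, ?_⟩
    · field_simp; linear_combination h3
    · field_simp; linear_combination -h2

lemma collinear_of_cross3 {u v w : V3} (h : cross3 (v - u) (w - u) = 0) :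
    Collinear ℝ ({u, v, w} : Set V3) := by
  rcases eq_or_ne (v - u) 0 with hd | hd
  · have hvu : v = u := by rwa [sub_eq_zero] at hd
    subst hvu
    simpa using collinear_pair ℝ v w
  · obtain ⟨k, hk⟩ := smul_of_cross3_eq_zero hd h
    rw [collinear_iff_exists_forall_eq_smul_vadd]
    refine ⟨u, v - u, ?_⟩
    rintro p (rfl | rfl | rfl)
    · exact ⟨0, by simp⟩
    · exact ⟨1, by simp⟩
    · exact ⟨k, by rw [← hk]; simp⟩

/-- `dot3 a` as a linear map. -/
def dotMap (a : V3) : V3 →ₗ[ℝ] ℝ where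
  toFun x := dot3 a x
  map_add' x y := by simp [dot3]; ring
  map_smul' t x := by simp [dot3, Prod.smul_def, smul_eq_mul]; ring

lemma coplanar_of_plane {a : V3} (ha : a ≠ 0) (c : ℝ) {s : Set V3}
    (hs : ∀ x ∈ s, dot3 a x = c) : Coplanar ℝ s := by
  have hker : vectorSpan ℝ s ≤ LinearMap.ker (dotMap a) := by
    rw [vectorSpan_def, Submodule.span_le]
    rintro y ⟨p, hp, q, hq, rfl⟩
    simp only [SetLike.mem_coe, LinearMap.mem_ker]
    show dot3 a (p - q) = 0
    rw [dot3_sub, hs p hp, hs q hq, sub_self]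
  have hrange : LinearMap.range (dotMap a) = ⊤ := by
    rw [LinearMap.range_eq_top]
    intro t
    refine ⟨(t / dot3 a a) • a, ?_⟩
    show dot3 a ((t / dot3 a a) • a) = t
    have hpos := dot3_self_pos ha
    have h : dot3 a ((t / dot3 a a) • a) = (t / dot3 a a) * dot3 a a := by
      simp [dot3, Prod.smul_def, smul_eq_mul]; ring
    rw [h]; field_simp
  have hfr : Module.finrank ℝ (LinearMap.ker (dotMap a)) = 2 := by
    have h1 := LinearMap.finrank_range_add_finrank_ker (dotMap a)
    rw [hrange] at h1
    have h2 : Module.finrank ℝ V3 = 3 := by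
      simp [Module.finrank_prod, Module.finrank_self]
    have h3 : Module.finrank ℝ (⊤ : Submodule ℝ ℝ) = 1 := by simp
    omega
  calc Module.rank ℝ (vectorSpan ℝ s) ≤ Module.rank ℝ (LinearMap.ker (dotMap a)) :=
        Submodule.rank_mono hker
    _ = 2 := by rw [← Module.finrank_eq_rank, hfr]; norm_num

/-! ### General position consequences -/

lemma not_collinear_of_genpos {P : Finset V3} (hcard : 4 ≤ P.card) (hgen : GenPos3 P)
    {u v w : V3} (hu : u ∈ P) (hv : v ∈ P) (hw : w ∈ P)
    (huv : u ≠ v) (huw : u ≠ w) (hvw : v ≠ w) :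
    ¬ Collinear ℝ ({u, v, w} : Set V3) := by
  intro hcol
  obtain ⟨z, hzP, hzm⟩ : ∃ z ∈ P, z ∉ ({u, v, w} : Finset V3) := by
    by_contra hcon
    push_neg at hcon
    have hsub : P ⊆ ({u, v, w} : Finset V3) := hcon
    have h1 := Finset.card_le_card hsub
    have h2 : ({u, v, w} : Finset V3).card ≤ 3 := by
      apply le_trans (Finset.card_insert_le _ _)
      have := Finset.card_insert_le v ({w} : Finset V3)
      simp at this ⊢
      omega
    omega
  have hsub : (insert z {u, v, w} : Finset V3) ⊆ P := by
    intro x hx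
    simp only [Finset.mem_insert, Finset.mem_singleton] at hx
    rcases hx with rfl | rfl | rfl | rfl <;> assumption
  have hc4 : (insert z {u, v, w} : Finset V3).card = 4 := by
    rw [Finset.card_insert_of_notMem hzm]
    rw [Finset.card_insert_of_notMem (by simp [huv, huw]),
      Finset.card_insert_of_notMem (by simp [hvw]), Finset.card_singleton]
  apply hgen _ hsub hc4
  have hset : ((insert z {u, v, w} : Finset V3) : Set V3) = insert z ({u, v, w} : Set V3) := by
    simp
  rw [hset]
  exact hcol.coplanar_insert z

lemma exists_tilt {P : Finset V3} (hcard : 4 ≤ P.card) (hgen : GenPos3 P)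
    {u v w : V3} (hu : u ∈ P) (hv : v ∈ P) (hw : w ∈ P)
    (huv : u ≠ v) (huw : u ≠ w) (hvw : v ≠ w) :
    ∃ b : V3, dot3 b u = dot3 b v ∧ dot3 b u < dot3 b w := by
  have hnc := not_collinear_of_genpos hcard hgen hu hv hw huv huw hvw
  have hcr : cross3 (v - u) (w - u) ≠ 0 := fun h => hnc (collinear_of_cross3 h)
  refine ⟨cross3 (cross3 (v - u) (w - u)) (v - u), ?_, ?_⟩
  · have h0 := cross3_dot_left (v - u) (w - u)
    rw [dot3_sub] at h0
    linarith
  · have h0 := cross3_dot_right (v - u) (w - u)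
    rw [dot3_sub] at h0
    have := dot3_self_pos hcr
    linarith

/-! ### Perturbation lemma -/

open Filter Topology in
lemma perturb (S : Finset V3) (u a b : V3) :
    ∃ ε : ℝ, 0 < ε ∧ ∀ x ∈ S,
      (dot3 a u < dot3 a x → dot3 (a + ε • b) u < dot3 (a + ε • b) x) ∧
      (dot3 a x < dot3 a u → dot3 (a + ε • b) x < dot3 (a + ε • b) u) := by
  have key : ∀ x ∈ S, ∀ᶠ ε : ℝ in 𝓝[>] 0,
      (dot3 a u < dot3 a x → dot3 (a + ε • b) u < dot3 (a + ε • b) x) ∧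
      (dot3 a x < dot3 a u → dot3 (a + ε • b) x < dot3 (a + ε • b) u) := by
    intro x _
    have hc : Continuous fun ε : ℝ =>
        (dot3 a x - dot3 a u) + ε * (dot3 b x - dot3 b u) := by fun_prop
    have ht : Tendsto (fun ε : ℝ => (dot3 a x - dot3 a u) + ε * (dot3 b x - dot3 b u))
        (𝓝 0) (𝓝 (dot3 a x - dot3 a u)) := by
      simpa using hc.tendsto 0
    rcases lt_trichotomy (dot3 a u) (dot3 a x) with h | h | h
    · have h1 : ∀ᶠ ε : ℝ in 𝓝 0,
          0 < (dot3 a x - dot3 a u) + ε * (dot3 b x - dot3 b u) :=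
        ht.eventually_const_lt (by linarith)
      refine (h1.filter_mono nhdsWithin_le_nhds).mono fun ε hε =>
        ⟨fun _ => ?_, fun h' => absurd h' (by linarith)⟩
      rw [dot3_add_smul, dot3_add_smul]; linarith
    · filter_upwards with ε
      exact ⟨fun h' => absurd h' (by linarith), fun h' => absurd h' (by linarith)⟩
    · have h1 : ∀ᶠ ε : ℝ in 𝓝 0,
          (dot3 a x - dot3 a u) + ε * (dot3 b x - dot3 b u) < 0 :=
        ht.eventually_lt_const (by linarith)
      refine (h1.filter_mono nhdsWithin_le_nhds).mono fun ε hε =>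
        ⟨fun h' => absurd h' (by linarith), fun _ => ?_⟩
      rw [dot3_add_smul, dot3_add_smul]; linarith
  have hall := (Filter.eventually_all_finset S).2 key
  have hpos : ∀ᶠ ε : ℝ in 𝓝[>] (0:ℝ), 0 < ε := self_mem_nhdsWithin
  obtain ⟨ε, h1, h2⟩ := (hpos.and hall).exists
  exact ⟨ε, h1, h2⟩

/-! ### Counting lemmas -/

lemma one_le_sideGT {P : Finset V3} {a : V3} {c : ℝ} {x : V3}
    (hx : x ∈ P) (h : c < dot3 a x) : 1 ≤ sideGT P a c := by
  have hfin : {y ∈ (P : Set V3) | c < dot3 a y}.Finite :=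
    P.finite_toSet.subset (Set.sep_subset _ _)
  exact (Set.ncard_pos hfin).2 ⟨x, by simpa using hx, h⟩

lemma one_le_sideLT {P : Finset V3} {a : V3} {c : ℝ} {x : V3}
    (hx : x ∈ P) (h : dot3 a x < c) : 1 ≤ sideLT P a c := by
  have hfin : {y ∈ (P : Set V3) | dot3 a y < c}.Finite :=
    P.finite_toSet.subset (Set.sep_subset _ _)
  exact (Set.ncard_pos hfin).2 ⟨x, by simpa using hx, h⟩

lemma sideLT_le_one {P : Finset V3} {a : V3} {c : ℝ} {p : V3}
    (h : ∀ x ∈ P, dot3 a x < c → x = p) : sideLT P a c ≤ 1 := by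
  have hsub : {y ∈ (P : Set V3) | dot3 a y < c} ⊆ {p} := by
    rintro y ⟨hy, hlt⟩
    exact h y (by simpa using hy) hlt
  calc sideLT P a c ≤ ({p} : Set V3).ncard :=
        Set.ncard_le_ncard hsub (Set.finite_singleton p)
    _ = 1 := Set.ncard_singleton p

lemma sideLT_eq_one_exists {P : Finset V3} {a : V3} {c : ℝ}
    (h1 : 1 ≤ sideLT P a c) (h2 : sideLT P a c ≤ 1) :
    ∃ p, p ∈ P ∧ dot3 a p < c ∧ ∀ x ∈ P, dot3 a x < c → x = p := by
  have heq : sideLT P a c = 1 := le_antisymm h2 h1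
  obtain ⟨p, hp⟩ := Set.ncard_eq_one.mp heq
  have hpm : p ∈ {y ∈ (P : Set V3) | dot3 a y < c} := by
    rw [hp]; exact Set.mem_singleton p
  refine ⟨p, by simpa using hpm.1, hpm.2, fun x hx hlt => ?_⟩
  have hxm : x ∈ {y ∈ (P : Set V3) | dot3 a y < c} := ⟨by simpa using hx, hlt⟩
  rw [hp] at hxm
  exact hxm

lemma sideGT_eq_sideLT_neg (P : Finset V3) (a : V3) (c : ℝ) :
    sideGT P a c = sideLT P (-a) (-c) := by
  unfold sideGT sideLT
  congr 1
  ext x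
  simp [dot3_neg]

/-! ### Hull edge from weak support -/

lemma hullEdge_of_support {P : Finset V3} (S : Finset V3) (hS : S ⊆ P)
    (hcard : 4 ≤ P.card) (hgen : GenPos3 P) {u v : V3}
    (hu : u ∈ S) (hv : v ∈ S) (huv : u ≠ v)
    {a : V3} (ha : a ≠ 0) (hauv : dot3 a u = dot3 a v)
    (hside : ∀ x ∈ S, x ≠ u → x ≠ v → dot3 a u ≤ dot3 a x) :
    HullEdge S u v := by
  by_cases hT : ∃ w ∈ S, w ≠ u ∧ w ≠ v ∧ dot3 a w = dot3 a u
  · obtain ⟨w, hwS, hwu, hwv, hwp⟩ := hT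
    have huniq : ∀ x ∈ S, x ≠ u → x ≠ v → dot3 a x = dot3 a u → x = w := by
      intro x hxS hxu hxv hxp
      by_contra hxw
      have hsub : (insert x {u, v, w} : Finset V3) ⊆ P := by
        intro y hy
        simp only [Finset.mem_insert, Finset.mem_singleton] at hy
        rcases hy with rfl | rfl | rfl | rfl
        · exact hS hxS
        · exact hS hu
        · exact hS hv
        · exact hS hwS
      have hc4 : (insert x {u, v, w} : Finset V3).card = 4 := by
        rw [Finset.card_insert_of_notMem (by simp [hxu, hxv, hxw]),
          Finset.card_insert_of_notMem (by simp [huv, Ne.symm hwu]),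
          Finset.card_insert_of_notMem (by simp [Ne.symm hwv]),
          Finset.card_singleton]
      apply hgen _ hsub hc4
      apply coplanar_of_plane ha (dot3 a u)
      intro y hy
      simp only [Finset.coe_insert, Set.mem_insert_iff, Finset.coe_singleton,
        Set.mem_singleton_iff] at hy
      rcases hy with rfl | rfl | rfl | rfl
      · exact hxp
      · rfl
      · exact hauv.symm
      · exact hwp
    obtain ⟨b, hb1, hb2⟩ := exists_tilt hcard hgen (hS hu) (hS hv) (hS hwS)
      huv (Ne.symm hwu) (Ne.symm hwv)
    obtain ⟨ε, hε, hpre⟩ := perturb S u a b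
    have ha'uv : dot3 (a + ε • b) u = dot3 (a + ε • b) v := by
      rw [dot3_add_smul, dot3_add_smul, hauv, hb1]
    have ha'w : dot3 (a + ε • b) u < dot3 (a + ε • b) w := by
      rw [dot3_add_smul, dot3_add_smul, hwp]
      have := mul_lt_mul_of_pos_left hb2 hε
      linarith
    have ha' : (a + ε • b) ≠ 0 := by
      intro h
      rw [h] at ha'w
      norm_num [dot3] at ha'w
    refine ⟨hu, hv, huv, a + ε • b, ha', ha'uv, ?_⟩
    intro x hxS hxu hxv
    rcases lt_or_eq_of_le (hside x hxS hxu hxv) with hlt | heq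
    · exact (hpre x hxS).1 hlt
    · have hxw : x = w := huniq x hxS hxu hxv heq.symm
      subst hxw
      exact ha'w
  · push_neg at hT
    refine ⟨hu, hv, huv, a, ha, hauv, ?_⟩
    intro x hxS hxu hxv
    rcases lt_or_eq_of_le (hside x hxS hxu hxv) with hlt | heq
    · exact hlt
    · exact absurd heq.symm (hT x hxS hxu hxv)

/-! ### Depth at least one iff not a hull edge -/

lemma depthAtLeast_one_of_not_hullEdge {P : Finset V3} (hcard : 4 ≤ P.card)
    (hgen : GenPos3 P) {u v : V3} (hu : u ∈ P) (hv : v ∈ P) (huv : u ≠ v)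
    (hne : ¬ HullEdge P u v) : DepthAtLeast P u v 1 := by
  intro a ha hauv
  constructor
  · by_cases hx : ∃ x ∈ P, dot3 a u < dot3 a x
    · obtain ⟨x, hxP, hlt⟩ := hx
      exact one_le_sideGT hxP hlt
    · push_neg at hx
      exfalso
      apply hne
      apply hullEdge_of_support P (le_refl P) hcard hgen hu hv huv
        (neg_ne_zero.mpr ha) (by rw [dot3_neg, dot3_neg, hauv])
      intro x hxP _ _
      rw [dot3_neg, dot3_neg]
      have := hx x hxP
      linarith
  · by_cases hx : ∃ x ∈ P, dot3 a x < dot3 a u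
    · obtain ⟨x, hxP, hlt⟩ := hx
      exact one_le_sideLT hxP hlt
    · push_neg at hx
      exfalso
      apply hne
      apply hullEdge_of_support P (le_refl P) hcard hgen hu hv huv ha hauv
      intro x hxP _ _
      exact hx x hxP

/-! ### Forward direction: depth 1 gives a deletion hull edge -/

lemma forward_side {P : Finset V3} (hcard : 4 ≤ P.card) (hgen : GenPos3 P)
    {u v : V3} (hu : u ∈ P) (hv : v ∈ P) (huv : u ≠ v)
    {a : V3} (ha : a ≠ 0) (hauv : dot3 a u = dot3 a v)
    (hle : sideLT P a (dot3 a u) ≤ 1) (h1 : DepthAtLeast P u v 1) :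
    ∃ p ∈ P, p ≠ u ∧ p ≠ v ∧ HullEdge (P.erase p) u v := by
  have hge := (h1 a ha hauv).2
  obtain ⟨p, hpP, hplt, hpuniq⟩ := sideLT_eq_one_exists hge hle
  have hpu : p ≠ u := fun h => by rw [h] at hplt; exact lt_irrefl _ hplt
  have hpv : p ≠ v := fun h => by rw [h, hauv] at hplt; exact lt_irrefl _ hplt
  refine ⟨p, hpP, hpu, hpv, ?_⟩
  apply hullEdge_of_support (P.erase p) (Finset.erase_subset p P) hcard hgen
    (Finset.mem_erase.mpr ⟨Ne.symm hpu, hu⟩) (Finset.mem_erase.mpr ⟨Ne.symm hpv, hv⟩)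
    huv ha hauv
  intro x hx hxu hxv
  by_contra hlt
  push_neg at hlt
  exact (Finset.ne_of_mem_erase hx) (hpuniq x (Finset.mem_of_mem_erase hx) hlt)

/-- A segment `uv` has depth exactly `1` iff it is not a hull edge of `P` but becomes
a hull edge after deleting some single point `p`. -/
theorem stmt13 (P : Finset V3) (n : ℕ) (hn : P.card = n) (hn4 : 4 ≤ n)
    (hgen : GenPos3 P) (hconv : ConvexPos3 P)
    (u v : V3) (hu : u ∈ P) (hv : v ∈ P) (huv : u ≠ v) :
    DepthEq P u v 1 ↔
      ¬ HullEdge P u v ∧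
        ∃ p ∈ P, p ≠ u ∧ p ≠ v ∧ HullEdge (P.erase p) u v := by
  have hcard : 4 ≤ P.card := hn ▸ hn4
  constructor
  · rintro ⟨h1, h2⟩
    constructor
    · rintro ⟨_, _, _, a, ha, hauv, hstrict⟩
      have hge := (h1 a ha hauv).2
      have hpos : sideLT P a (dot3 a u) ≠ 0 := by omega
      obtain ⟨x, hxm⟩ := Set.nonempty_of_ncard_ne_zero hpos
      obtain ⟨hxP, hxlt⟩ := hxm
      have hxu : x ≠ u := fun h => by rw [h] at hxlt; exact lt_irrefl _ hxlt
      have hxv : x ≠ v := fun h => by rw [h, hauv] at hxlt; exact lt_irrefl _ hxlt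
      exact absurd (hstrict x (by simpa using hxP) hxu hxv) (by linarith)
    · unfold DepthAtLeast at h2
      push_neg at h2
      obtain ⟨a, ha, hauv, hbad⟩ := h2
      by_cases hg : 2 ≤ sideGT P a (dot3 a u)
      · have hlt : sideLT P a (dot3 a u) ≤ 1 := by
          have := hbad hg
          omega
        exact forward_side hcard hgen hu hv huv ha hauv hlt h1
      · have hlt : sideLT P (-a) (dot3 (-a) u) ≤ 1 := by
          rw [dot3_neg, ← sideGT_eq_sideLT_neg]
          omega
        exact forward_side hcard hgen hu hv huv (neg_ne_zero.mpr ha)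
          (by rw [dot3_neg, dot3_neg, hauv]) hlt h1
  · rintro ⟨hne, p, hpP, hpu, hpv, hedge⟩
    have h1 : DepthAtLeast P u v 1 :=
      depthAtLeast_one_of_not_hullEdge hcard hgen hu hv huv hne
    refine ⟨h1, ?_⟩
    obtain ⟨huS, hvS, _, a, ha, hauv, hstrict⟩ := hedge
    rcases lt_trichotomy (dot3 a p) (dot3 a u) with hp | hp | hp
    · intro h2
      have hge := (h2 a ha hauv).2
      have hle : sideLT P a (dot3 a u) ≤ 1 := by
        apply sideLT_le_one (p := p)
        intro x hx hlt
        by_contra hxp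
        have hxu : x ≠ u := fun h => by rw [h] at hlt; exact lt_irrefl _ hlt
        have hxv : x ≠ v := fun h => by rw [h, hauv] at hlt; exact lt_irrefl _ hlt
        exact absurd (hstrict x (Finset.mem_erase.mpr ⟨hxp, hx⟩) hxu hxv) (by linarith)
      omega
    · obtain ⟨b, hb1, hb2⟩ := exists_tilt hcard hgen hu hv hpP huv
        (Ne.symm hpu) (Ne.symm hpv)
      obtain ⟨ε, hε, hpre⟩ := perturb P u a (-b)
      have ha'uv : dot3 (a + ε • (-b)) u = dot3 (a + ε • (-b)) v := by
        rw [dot3_add_smul, dot3_add_smul, hauv, dot3_neg, dot3_neg, hb1]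
      have ha'p : dot3 (a + ε • (-b)) p < dot3 (a + ε • (-b)) u := by
        rw [dot3_add_smul, dot3_add_smul, hp, dot3_neg, dot3_neg]
        have := mul_lt_mul_of_pos_left hb2 hε
        linarith
      have ha' : (a + ε • (-b)) ≠ 0 := by
        intro h
        rw [h] at ha'p
        norm_num [dot3] at ha'p
      intro h2
      have hge := (h2 _ ha' ha'uv).2
      have hle : sideLT P (a + ε • (-b)) (dot3 (a + ε • (-b)) u) ≤ 1 := by
        apply sideLT_le_one (p := p)
        intro x hx hlt
        by_contra hxp
        have hxu : x ≠ u := fun h => by rw [h] at hlt; exact lt_irrefl _ hlt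
        have hxv : x ≠ v := fun h => by rw [h, ha'uv] at hlt; exact lt_irrefl _ hlt
        have h4 : dot3 a u < dot3 a x :=
          hstrict x (Finset.mem_erase.mpr ⟨hxp, hx⟩) hxu hxv
        have := (hpre x hx).1 h4
        linarith
      omega
    · exact absurd ⟨hu, hv, huv, a, ha, hauv, fun x hx hxu hxv => by
        by_cases hxp : x = p
        · subst hxp; exact hp
        · exact hstrict x (Finset.mem_erase.mpr ⟨hxp, hx⟩) hxu hxv⟩ hne
end
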